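/- Let θ, β ∈ ℝ and let s, α ∈ ℝ satisfy s < 1 and 2α + s > 1 (so that α > (1−s)/2 > 0). Then the integral ∫_0^∞ u^{−s} (1 + u²)^{−α} [ 1 + (u² / (2(1+u²))) (cosh(2θ) − 1) ]^{−β} du converges and equals ( Γ(α + (s−1)/2) Γ((1−s)/2) / (2 Γ(α)) ) · F, where F := ( Γ(α) / ( Γ((1−s)/2) Γ(α − (1−s)/2) ) ) ∫_0^1 v^{(1−s)/2 − 1} (1 − v)^{α − (1−s)/2 − 1} (1 + v sinh²θ)^{−β} dv is the Euler integral representation of the Gauss hypergeometric function ₂F₁(β, (1−s)/2; α; −sinh²θ). -/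

import Mathlib

open MeasureTheory Set
-- substitution map
noncomputable def psi (u : ℝ) : ℝ := u ^ 2 / (1 + u ^ 2)

lemma psi_deriv {u : ℝ} (hu : u ∈ Ioi (0:ℝ)) :
    HasDerivWithinAt psi (2 * u / (1 + u ^ 2) ^ 2) (Ioi 0) u := by
  have h1 : (0:ℝ) < 1 + u ^ 2 := by positivity
  have h := ((hasDerivAt_pow 2 u).div ((hasDerivAt_pow 2 u).const_add 1) h1.ne')
  refine (h.congr_deriv ?_).hasDerivWithinAt
  rw [show (2:ℕ) - 1 = 1 from rfl]
  push_cast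
  ring

lemma psi_inj : InjOn psi (Ioi (0:ℝ)) := by
  intro a ha b hb h
  simp only [psi] at h
  have ha' : (0:ℝ) < a := ha
  have hb' : (0:ℝ) < b := hb
  have h1 : (0:ℝ) < 1 + a ^ 2 := by positivity
  have h2 : (0:ℝ) < 1 + b ^ 2 := by positivity
  rw [div_eq_div_iff h1.ne' h2.ne'] at h
  nlinarith [mul_pos ha' hb']

lemma psi_image : psi '' (Ioi (0:ℝ)) = Ioo 0 1 := by
  ext v
  constructor
  · rintro ⟨u, hu, rfl⟩
    have hu' : (0:ℝ) < u := hu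
    have h1 : (0:ℝ) < 1 + u ^ 2 := by positivity
    exact ⟨div_pos (by positivity) h1, by rw [psi, div_lt_one h1]; nlinarith⟩
  · rintro ⟨hv0, hv1⟩
    have h1 : (0:ℝ) < 1 - v := by linarith
    have h2 : (0:ℝ) < v / (1 - v) := div_pos hv0 h1
    refine ⟨Real.sqrt (v / (1 - v)), Real.sqrt_pos.mpr h2, ?_⟩
    simp only [psi, Real.sq_sqrt h2.le]
    field_simp
    ring



lemma key (θ β s α : ℝ) {u : ℝ} (hu : 0 < u) :
    |2 * u / (1 + u ^ 2) ^ 2| *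
      (psi u ^ ((1 - s) / 2 - 1) * (1 - psi u) ^ (α - (1 - s) / 2 - 1) *
        (1 + psi u * Real.sinh θ ^ 2) ^ (-β))
    = 2 * (u ^ (-s) * (1 + u ^ 2) ^ (-α) *
        (1 + u ^ 2 / (2 * (1 + u ^ 2)) * (Real.cosh (2 * θ) - 1)) ^ (-β)) := by
  have hX : (0:ℝ) < 1 + u ^ 2 := by positivity
  have hb : 1 + u ^ 2 / (2 * (1 + u ^ 2)) * (Real.cosh (2 * θ) - 1)
      = 1 + psi u * Real.sinh θ ^ 2 := by
    rw [Real.cosh_two_mul, Real.cosh_sq, psi]; field_simp; ring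
  have h1m : 1 - psi u = 1 / (1 + u ^ 2) := by rw [psi]; field_simp; ring
  have upow : (u ^ 2) ^ ((1 - s) / 2 - 1) = u ^ (2 * ((1 - s) / 2 - 1)) := by
    rw [← Real.rpow_natCast u 2, ← Real.rpow_mul hu.le]; norm_num
  have e1 : (u ^ 2 / (1 + u ^ 2)) ^ ((1 - s) / 2 - 1)
      = u ^ (2 * ((1 - s) / 2 - 1)) * ((1 + u ^ 2) ^ ((1 - s) / 2 - 1))⁻¹ := by
    rw [Real.div_rpow (by positivity) hX.le, upow, div_eq_mul_inv]
  have e2 : ((1:ℝ) / (1 + u ^ 2)) ^ (α - (1 - s) / 2 - 1)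
      = (1 + u ^ 2) ^ (-(α - (1 - s) / 2 - 1)) := by
    rw [one_div, ← Real.rpow_neg_one, ← Real.rpow_mul hX.le]
    congr 1; ring
  have h2X : ((1:ℝ) + u ^ 2) ^ (-2:ℝ) = (((1:ℝ) + u ^ 2) ^ (2:ℕ))⁻¹ := by
    rw [Real.rpow_neg hX.le]; congr 1
    rw [← Real.rpow_natCast (1 + u ^ 2) 2]; norm_num
  have main : 2 * u / (1 + u ^ 2) ^ 2 *
      ((u ^ 2 / (1 + u ^ 2)) ^ ((1 - s) / 2 - 1) * ((1:ℝ) / (1 + u ^ 2)) ^ (α - (1 - s) / 2 - 1))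
      = 2 * (u ^ (-s) * (1 + u ^ 2) ^ (-α)) := by
    have hp : -s = 1 + 2 * ((1 - s) / 2 - 1) := by ring
    have hq : -α = -2 + -(α - (1 - s) / 2 - 1) + ((1 - s) / 2 - 1) * (-1) := by ring
    rw [e1, e2, hp, hq, Real.rpow_add hu, Real.rpow_add hX, Real.rpow_add hX, Real.rpow_one,
      h2X, Real.rpow_mul hX.le, Real.rpow_neg_one]
    ring
  rw [hb, abs_of_pos (by positivity), h1m, psi]
  linear_combination (1 + u ^ 2 / (1 + u ^ 2) * Real.sinh θ ^ 2) ^ (-β) * main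

lemma rpow_bound {a b x y : ℝ} (ha : 0 < a) (hax : a ≤ x) (hxb : x ≤ b) :
    x ^ y ≤ max (a ^ y) (b ^ y) := by
  rcases le_or_gt 0 y with hy | hy
  · exact le_max_of_le_right (Real.rpow_le_rpow (ha.trans_le hax).le hxb hy)
  · exact le_max_of_le_left (Real.rpow_le_rpow_of_nonpos ha hax hy.le)

lemma gInt (θ β s α : ℝ) (hs : s < 1) (hα : 1 < 2 * α + s) :
    IntegrableOn
      (fun v : ℝ => v ^ ((1 - s) / 2 - 1) * (1 - v) ^ (α - (1 - s) / 2 - 1) *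
        (1 + v * Real.sinh θ ^ 2) ^ (-β)) (Ioo 0 1) := by
  set p := (1 - s) / 2 - 1 with hp
  set q := α - (1 - s) / 2 - 1 with hq
  have hp1 : (-1:ℝ) < p := by rw [hp]; linarith
  have hq1 : (-1:ℝ) < q := by rw [hq]; linarith
  set g := fun v : ℝ => v ^ p * (1 - v) ^ q * (1 + v * Real.sinh θ ^ 2) ^ (-β) with hg
  have hmeas : ∀ t : Set ℝ, AEStronglyMeasurable g (volume.restrict t) := by
    intro t
    apply Measurable.aestronglyMeasurable
    fun_prop
  set M1 : ℝ := max (((1:ℝ)/2) ^ q) ((1:ℝ) ^ q) with hM1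
  set M2 : ℝ := max ((1:ℝ) ^ (-β)) ((1 + Real.sinh θ ^ 2) ^ (-β)) with hM2
  have hM2pos : 0 < M2 := lt_max_of_lt_left (by norm_num)
  have hM1pos : 0 < M1 := lt_max_of_lt_left (by positivity)
  have part1 : IntegrableOn g (Ioc 0 (1/2)) := by
    apply Integrable.mono' (g := fun v => (M1 * M2) * v ^ p)
    · have h0 : IntervalIntegrable (fun x : ℝ => x ^ p) volume 0 (1/2) :=
        intervalIntegral.intervalIntegrable_rpow' hp1
      have h0' := (intervalIntegrable_iff_integrableOn_Ioc_of_le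
        (by norm_num : (0:ℝ) ≤ 1/2)).mp h0
      exact h0'.const_mul _
    · exact hmeas _
    · filter_upwards [ae_restrict_mem measurableSet_Ioc] with v hv
      obtain ⟨hv0, hv2⟩ := hv
      have hvp : (0:ℝ) < v ^ p := Real.rpow_pos_of_pos hv0 _
      have b1 : (1 - v) ^ q ≤ M1 := rpow_bound (by norm_num) (by linarith) (by linarith)
      have b2 : (1 + v * Real.sinh θ ^ 2) ^ (-β) ≤ M2 := by
        refine rpow_bound one_pos (by nlinarith [sq_nonneg (Real.sinh θ)]) ?_
        nlinarith [sq_nonneg (Real.sinh θ)]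
      have hb1 : (0:ℝ) < (1 - v) ^ q := Real.rpow_pos_of_pos (by linarith) _
      have hb2 : (0:ℝ) < (1 + v * Real.sinh θ ^ 2) ^ (-β) :=
        Real.rpow_pos_of_pos (by nlinarith [sq_nonneg (Real.sinh θ)]) _
      rw [Real.norm_eq_abs, abs_of_pos (by positivity), hg]
      calc v ^ p * (1 - v) ^ q * (1 + v * Real.sinh θ ^ 2) ^ (-β)
          ≤ v ^ p * M1 * M2 := by
            apply mul_le_mul (mul_le_mul le_rfl b1 hb1.le hvp.le) b2 hb2.le
            positivity
        _ = M1 * M2 * v ^ p := by ring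
  set M1' : ℝ := max (((1:ℝ)/2) ^ p) ((1:ℝ) ^ p) with hM1'
  have hM1'pos : 0 < M1' := lt_max_of_lt_left (by positivity)
  have part2 : IntegrableOn g (Ioo (1/2) 1) := by
    apply Integrable.mono' (g := fun v => (M1' * M2) * (1 - v) ^ q)
    · have h0 : IntervalIntegrable (fun x : ℝ => x ^ q) volume 0 (1/2) :=
        intervalIntegral.intervalIntegrable_rpow' hq1
      have h1 := (h0.comp_sub_left 1).symm
      norm_num at h1
      have h2 := (intervalIntegrable_iff_integrableOn_Ioc_of_le
        (by norm_num : (1:ℝ)/2 ≤ 1)).mp h1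
      exact IntegrableOn.mono_set (h2.const_mul _) Ioo_subset_Ioc_self
    · exact hmeas _
    · filter_upwards [ae_restrict_mem measurableSet_Ioo] with v hv
      obtain ⟨hv2, hv1⟩ := hv
      have hv0 : (0:ℝ) < v := by linarith
      have hq0 : (0:ℝ) < (1 - v) ^ q := Real.rpow_pos_of_pos (by linarith) _
      have b1 : v ^ p ≤ M1' := rpow_bound (by norm_num) (by linarith) (by linarith)
      have b2 : (1 + v * Real.sinh θ ^ 2) ^ (-β) ≤ M2 := by
        refine rpow_bound one_pos (by nlinarith [sq_nonneg (Real.sinh θ)]) ?_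
        nlinarith [sq_nonneg (Real.sinh θ)]
      have hb2 : (0:ℝ) < (1 + v * Real.sinh θ ^ 2) ^ (-β) :=
        Real.rpow_pos_of_pos (by nlinarith [sq_nonneg (Real.sinh θ)]) _
      have hvp : (0:ℝ) < v ^ p := Real.rpow_pos_of_pos hv0 _
      rw [Real.norm_eq_abs, abs_of_pos (by positivity), hg]
      calc v ^ p * (1 - v) ^ q * (1 + v * Real.sinh θ ^ 2) ^ (-β)
          ≤ M1' * (1 - v) ^ q * M2 := by
            apply mul_le_mul (mul_le_mul b1 le_rfl hq0.le hM1'pos.le) b2 hb2.le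
            positivity
        _ = M1' * M2 * (1 - v) ^ q := by ring
  exact (part1.union part2).mono_set (fun v hv => by
    rcases le_or_gt v (1/2) with h | h
    · exact Or.inl ⟨hv.1, h⟩
    · exact Or.inr ⟨h, hv.2⟩)

lemma alg (I A B C : ℝ) (hA : A ≠ 0) (hB : B ≠ 0) (hC : C ≠ 0) :
    I = C * A / (2 * B) * (B / (A * C) * (2 * I)) := by
  field_simp



/-- the integral `∫_0^∞ u^{−s}(1+u²)^{−α}[1 + u²(cosh 2θ − 1)/(2(1+u²))]^{−β} du`
converges for `s < 1`, `2α + s > 1`, and equals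
`(Γ(α+(s−1)/2)Γ((1−s)/2)/(2Γ(α))) · ₂F₁(β, (1−s)/2; α; −sinh²θ)`, the hypergeometric
function being given by its Euler integral representation. -/
theorem stmt_7 (θ β s α : ℝ) (hs : s < 1) (hα : 1 < 2 * α + s) :
    IntegrableOn
      (fun u : ℝ => u ^ (-s) * (1 + u ^ 2) ^ (-α) *
        (1 + u ^ 2 / (2 * (1 + u ^ 2)) * (Real.cosh (2 * θ) - 1)) ^ (-β))
      (Set.Ioi 0) ∧
    ∫ u in Set.Ioi (0 : ℝ),
        u ^ (-s) * (1 + u ^ 2) ^ (-α) *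
          (1 + u ^ 2 / (2 * (1 + u ^ 2)) * (Real.cosh (2 * θ) - 1)) ^ (-β)
      = Real.Gamma (α + (s - 1) / 2) * Real.Gamma ((1 - s) / 2) / (2 * Real.Gamma α) *
        (Real.Gamma α / (Real.Gamma ((1 - s) / 2) * Real.Gamma (α - (1 - s) / 2)) *
          ∫ v in (0 : ℝ)..1,
            v ^ ((1 - s) / 2 - 1) * (1 - v) ^ (α - (1 - s) / 2 - 1) *
              (1 + v * Real.sinh θ ^ 2) ^ (-β)) := by
  have hderiv : ∀ u ∈ Ioi (0:ℝ),
      HasDerivWithinAt psi (2 * u / (1 + u ^ 2) ^ 2) (Ioi 0) u := fun u hu => psi_deriv hu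
  set g := fun v : ℝ => v ^ ((1 - s) / 2 - 1) * (1 - v) ^ (α - (1 - s) / 2 - 1) *
      (1 + v * Real.sinh θ ^ 2) ^ (-β) with hgdef
  have heq : EqOn (fun u : ℝ => |2 * u / (1 + u ^ 2) ^ 2| • g (psi u))
      (fun u : ℝ => 2 * (u ^ (-s) * (1 + u ^ 2) ^ (-α) *
        (1 + u ^ 2 / (2 * (1 + u ^ 2)) * (Real.cosh (2 * θ) - 1)) ^ (-β))) (Ioi 0) :=
    fun u hu => by simpa [smul_eq_mul, hgdef] using key θ β s α (mem_Ioi.mp hu)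
  have hiff := integrableOn_image_iff_integrableOn_abs_deriv_smul measurableSet_Ioi
    hderiv psi_inj g
  rw [psi_image] at hiff
  have hf2 : IntegrableOn (fun u : ℝ => 2 * (u ^ (-s) * (1 + u ^ 2) ^ (-α) *
      (1 + u ^ 2 / (2 * (1 + u ^ 2)) * (Real.cosh (2 * θ) - 1)) ^ (-β))) (Ioi 0) :=
    (hiff.mp (gInt θ β s α hs hα)).congr_fun heq measurableSet_Ioi
  have hf : IntegrableOn (fun u : ℝ => u ^ (-s) * (1 + u ^ 2) ^ (-α) *
      (1 + u ^ 2 / (2 * (1 + u ^ 2)) * (Real.cosh (2 * θ) - 1)) ^ (-β)) (Ioi 0) :=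
    IntegrableOn.congr_fun (hf2.div_const 2) (fun u _ => by ring) measurableSet_Ioi
  refine ⟨hf, ?_⟩
  have hint := integral_image_eq_integral_abs_deriv_smul measurableSet_Ioi hderiv psi_inj g
  rw [psi_image, setIntegral_congr_fun measurableSet_Ioi heq, integral_const_mul] at hint
  rw [intervalIntegral.integral_of_le zero_le_one, integral_Ioc_eq_integral_Ioo]
  have h1 : (0:ℝ) < (1 - s) / 2 := by linarith
  have h2 : (0:ℝ) < α - (1 - s) / 2 := by linarith
  have h3 : (0:ℝ) < α := by linarith
  have e : α + (s - 1) / 2 = α - (1 - s) / 2 := by ring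
  have hA := (Real.Gamma_pos_of_pos h1).ne'
  have hB := (Real.Gamma_pos_of_pos h3).ne'
  have hC := (Real.Gamma_pos_of_pos h2).ne'
  rw [e, hint]
  exact alg _ _ _ _ hA hB hC
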